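/- arXiv:2605.20945 — 3 statements merged into one kernel-verified Lean document; each statement's English description precedes it below -/
import Mathlib

section
/- Let Γ be amenable and Δ be non-amenable, and suppose Γ × Δ acts on a tree T with no edge inversions, no globally fixed vertex, and amenable edge stabilizers. If the restricted action of the subgroup {1} × Δ has a globally fixed vertex, then its fixed-point set is a single vertex v, and v is fixed by all of Γ × Δ, a contradiction. Hence the action of Δ on T has no globally fixed vertex, no edge inversions, and amenable edge stabilizers; i.e. Δ splits over an amenable subgroup whenever Γ × Δ does. -/
open SimpleGraph


/-- A group is amenable if it carries a left-invariant finitely additive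
probability measure defined on all subsets. -/
def IsAmenable (G : Type*) [Group G] : Prop :=
  ∃ μ : Set G → ℝ,
    (∀ A : Set G, 0 ≤ μ A) ∧
    μ Set.univ = 1 ∧
    (∀ A B : Set G, Disjoint A B → μ (A ∪ B) = μ A + μ B) ∧
    (∀ (g : G) (A : Set G), μ ((g * ·) '' A) = μ A)

lemma isAmenable_of_injective {H G : Type*} [Group H] [Group G] (f : H →* G)
    (hf : Function.Injective f) (hG : IsAmenable G) : IsAmenable H := by
  classical
  obtain ⟨μ, hpos, huniv, hadd, hinvar⟩ := hG
  let q : G → G := fun g => (Quotient.mk (QuotientGroup.rightRel f.range) g).out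
  have hq : ∀ g : G, ∃ h : H, f h = g * (q g)⁻¹ := by
    intro g
    have h1 : Quotient.mk (QuotientGroup.rightRel f.range) (q g)
        = Quotient.mk (QuotientGroup.rightRel f.range) g := Quotient.out_eq _
    exact QuotientGroup.rightRel_apply.mp (Quotient.exact h1)
  let π : G → H := fun g => (hq g).choose
  have hπ : ∀ g : G, f (π g) = g * (q g)⁻¹ := fun g => (hq g).choose_spec
  have hqmul : ∀ (h : H) (g : G), q (f h * g) = q g := by
    intro h g
    have : Quotient.mk (QuotientGroup.rightRel f.range) (f h * g)
        = Quotient.mk (QuotientGroup.rightRel f.range) g := by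
      apply Quotient.sound
      apply QuotientGroup.rightRel_apply.mpr
      refine ⟨h⁻¹, ?_⟩
      simp [mul_inv_rev]
    simp only [q, this]
  have hπmul : ∀ (h : H) (g : G), π (f h * g) = h * π g := by
    intro h g
    apply hf
    rw [hπ, map_mul, hπ, hqmul, mul_assoc]
  refine ⟨fun A => μ (π ⁻¹' A), fun A => hpos _, by simp [huniv], ?_, ?_⟩
  · intro A B hAB
    show μ (π ⁻¹' (A ∪ B)) = μ (π ⁻¹' A) + μ (π ⁻¹' B)
    rw [Set.preimage_union]
    exact hadd _ _ (hAB.preimage π)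
  · intro h A
    have key : π ⁻¹' ((h * ·) '' A) = (f h * ·) '' (π ⁻¹' A) := by
      ext x
      constructor
      · rintro ⟨a, haA, hax⟩
        refine ⟨(f h)⁻¹ * x, ?_, by simp⟩
        have : π ((f h)⁻¹ * x) = h⁻¹ * π x := by
          have := hπmul h⁻¹ x
          rwa [map_inv] at this
        rw [Set.mem_preimage, this, ← hax]
        simpa using haA
      · rintro ⟨y, hy, rfl⟩
        exact ⟨π y, hy, (hπmul h y).symm⟩
    show μ (π ⁻¹' ((h * ·) '' A)) = μ (π ⁻¹' A)
    rw [key, hinvar]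


/-- Let `Γ` be amenable, `Δ` non-amenable, and suppose `Γ × Δ` acts on a tree by graph
automorphisms with no edge inversions, no globally fixed vertex, and amenable edge
stabilizers. Then the restricted action of `Δ` (via the inclusion `Δ → Γ × Δ`) also has
no globally fixed vertex, no edge inversions, and amenable edge stabilizers. -/
theorem stmt6 {Γ Δ : Type} [Group Γ] [Group Δ]
    (hΓ : IsAmenable Γ) (hΔ : ¬ IsAmenable Δ)
    {V : Type} (T : SimpleGraph V) (hT : T.IsTree)
    (φ : Γ × Δ →* Equiv.Perm V)
    (hadj : ∀ (p : Γ × Δ) (u v : V), T.Adj u v → T.Adj (φ p u) (φ p v))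
    (hinv : ¬ ∃ (p : Γ × Δ) (u v : V), T.Adj u v ∧ φ p u = v ∧ φ p v = u)
    (hfix : ¬ ∃ v : V, ∀ p : Γ × Δ, φ p v = v)
    (hstab : ∀ u v : V, T.Adj u v →
      IsAmenable ((MulAction.stabilizer (Equiv.Perm V) u ⊓
        MulAction.stabilizer (Equiv.Perm V) v).comap φ)) :
    (¬ ∃ v : V, ∀ d : Δ, (φ.comp (MonoidHom.inr Γ Δ)) d v = v) ∧
    (¬ ∃ (d : Δ) (u v : V), T.Adj u v ∧
        (φ.comp (MonoidHom.inr Γ Δ)) d u = v ∧ (φ.comp (MonoidHom.inr Γ Δ)) d v = u) ∧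
    (∀ u v : V, T.Adj u v →
      IsAmenable ((MulAction.stabilizer (Equiv.Perm V) u ⊓
        MulAction.stabilizer (Equiv.Perm V) v).comap (φ.comp (MonoidHom.inr Γ Δ)))) := by
  classical
  -- If two adjacent vertices are both fixed by all of `{1} × Δ`, then `Δ` is amenable.
  have edge_case : ∀ u x : V, T.Adj u x → (∀ d : Δ, φ (1, d) u = u) →
      (∀ d : Δ, φ (1, d) x = x) → False := by
    intro u x hux hu hx
    apply hΔ
    refine isAmenable_of_injective
      (G := ((MulAction.stabilizer (Equiv.Perm V) u ⊓
        MulAction.stabilizer (Equiv.Perm V) x).comap φ))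
      ⟨⟨fun d => ⟨(1, d), ?_⟩, ?_⟩, ?_⟩ ?_ (hstab u x hux)
    · refine Subgroup.mem_comap.mpr ⟨?_, ?_⟩
      · show φ (1, d) • u = u
        simpa [Equiv.Perm.smul_def] using hu d
      · show φ (1, d) • x = x
        simpa [Equiv.Perm.smul_def] using hx d
    · ext <;> simp
    · intro a b
      ext <;> simp
    · intro a b hab
      have h2 := Subtype.ext_iff.mp hab
      have := congrArg Prod.snd h2
      simpa using this
  refine ⟨?_, ?_, ?_⟩
  · rintro ⟨v, hv⟩
    have hv' : ∀ d : Δ, φ (1, d) v = v := fun d => hv d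
    by_cases hsing : ∀ w : V, (∀ d : Δ, φ (1, d) w = w) → w = v
    · -- the fixed set is a single vertex, fixed by everyone
      apply hfix
      refine ⟨v, ?_⟩
      rintro ⟨g, d⟩
      have hcomm : ∀ d : Δ, φ (1, d) (φ (g, 1) v) = φ (g, 1) v := by
        intro d
        have h1 : ((1 : Γ), d) * (g, (1 : Δ)) = (g, (1 : Δ)) * (1, d) := by
          ext <;> simp
        calc φ (1, d) (φ (g, 1) v) = φ ((1, d) * (g, 1)) v := by rw [map_mul]; rfl
          _ = φ ((g, 1) * (1, d)) v := by rw [h1]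
          _ = φ (g, 1) (φ (1, d) v) := by rw [map_mul]; rfl
          _ = φ (g, 1) v := by rw [hv' d]
      have hg : φ (g, 1) v = v := hsing _ hcomm
      have : ((g : Γ), (d : Δ)) = (g, 1) * (1, d) := by ext <;> simp
      rw [this, map_mul]
      show φ (g, 1) (φ (1, d) v) = v
      rw [hv' d, hg]
    · -- there is another fixed vertex; walk towards it, first edge has both ends fixed
      push_neg at hsing
      obtain ⟨w, hw, hwv⟩ := hsing
      obtain ⟨p, hp, hup⟩ := hT.existsUnique_path v w
      cases p with
      | nil => exact hwv rfl
      | @cons _ x _ h q =>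
        -- show x is fixed by all d
        have hxfix : ∀ d : Δ, φ (1, d) x = x := by
          intro d
          set fd : T →g T := ⟨fun y => φ (1, d) y, fun hyz => hadj (1, d) _ _ hyz⟩ with hfd
          have hfdinj : Function.Injective fd := (φ (1, d)).injective
          have hmap : (((Walk.cons h q).map fd).copy (hv' d) (hw d)) = Walk.cons h q := by
            apply hup
            rw [Walk.isPath_copy]
            exact SimpleGraph.Walk.map_isPath_of_injective hfdinj hp
          have hsup := congrArg SimpleGraph.Walk.support hmap
          rw [Walk.support_copy, Walk.support_map] at hsup
          rw [Walk.support_cons, q.support_eq_cons] at hsup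
          simp only [List.map_cons, List.cons.injEq] at hsup
          exact hsup.2.1
        exact edge_case v x h hv' hxfix
  · rintro ⟨d, u, v, h1, h2, h3⟩
    exact hinv ⟨(1, d), u, v, h1, h2, h3⟩
  · intro u v huv
    refine isAmenable_of_injective
      (G := ((MulAction.stabilizer (Equiv.Perm V) u ⊓
        MulAction.stabilizer (Equiv.Perm V) v).comap φ))
      ⟨⟨fun d => ⟨(1, (d : Δ)), ?_⟩, ?_⟩, ?_⟩ ?_ (hstab u v huv)
    · exact d.2
    · ext <;> simp
    · intro a b
      ext <;> simp
    · intro a b hab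
      apply Subtype.ext
      have h2 := Subtype.ext_iff.mp hab
      have := congrArg Prod.snd h2
      simpa using this
end

section
/- Let Γ × Δ be a direct product of groups with Γ amenable. Then Γ × Δ splits over an amenable subgroup if and only if Δ splits over an amenable subgroup, provided Δ is non-amenable. -/
/-- A group splits over an amenable subgroup if it acts on a tree by graph
automorphisms with no globally fixed vertex, no edge inversions, and all
edge stabilizers amenable. -/
def SplitsOverAmenable (G : Type*) [Group G] : Prop :=
  ∃ (V : Type) (T : SimpleGraph V) (φ : G →* Equiv.Perm V),
    T.IsTree ∧
    (∀ (g : G) (u v : V), T.Adj u v → T.Adj (φ g u) (φ g v)) ∧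
    (¬ ∃ (g : G) (u v : V), T.Adj u v ∧ φ g u = v ∧ φ g v = u) ∧
    (¬ ∃ v : V, ∀ g : G, φ g v = v) ∧
    (∀ u v : V, T.Adj u v →
      IsAmenable ((MulAction.stabilizer (Equiv.Perm V) u ⊓
        MulAction.stabilizer (Equiv.Perm V) v).comap φ))

namespace AmenAux

variable {X : Type*} {μ : Set X → ℝ}

structure IsMean (μ : Set X → ℝ) : Prop where
  nonneg : ∀ A : Set X, 0 ≤ μ A
  total : μ Set.univ = 1
  add : ∀ A B : Set X, Disjoint A B → μ (A ∪ B) = μ A + μ B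

lemma IsMean.empty (hμ : IsMean μ) : μ ∅ = 0 := by
  have := hμ.add ∅ ∅ (by simp)
  simp at this; linarith

lemma IsMean.mono (hμ : IsMean μ) {A B : Set X} (h : A ⊆ B) : μ A ≤ μ B := by
  have hd : Disjoint A (B \ A) := Set.disjoint_sdiff_right
  have := hμ.add A (B \ A) hd
  rw [Set.union_diff_cancel h] at this
  have := hμ.nonneg (B \ A)
  linarith

lemma IsMean.le_one (hμ : IsMean μ) (A : Set X) : μ A ≤ 1 :=
  hμ.total ▸ hμ.mono (Set.subset_univ A)

lemma IsMean.biUnion (hμ : IsMean μ) {ι : Type*} (s : Finset ι) (A : ι → Set X)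
    (hd : ∀ i ∈ s, ∀ j ∈ s, i ≠ j → Disjoint (A i) (A j)) :
    μ (⋃ i ∈ s, A i) = ∑ i ∈ s, μ (A i) := by
  classical
  induction s using Finset.induction with
  | empty => simpa using hμ.empty
  | @insert a s hnotmem ih =>
    rw [Finset.set_biUnion_insert, Finset.sum_insert hnotmem,
      ← ih (fun i hi j hj hij => hd i (Finset.mem_insert_of_mem hi) j (Finset.mem_insert_of_mem hj) hij)]
    apply hμ.add
    apply Set.disjoint_iUnion_right.2
    intro i
    apply Set.disjoint_iUnion_right.2
    intro hi
    exact hd a (Finset.mem_insert_self a s) i (Finset.mem_insert_of_mem hi)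
      (fun h => hnotmem (h ▸ hi))

/-- Master positivity lemma. -/
lemma IsMean.master (hμ : IsMean μ) {ι : Type*} [DecidableEq ι] (s : Finset ι)
    (c : ι → ℝ) (A : ι → Set X)
    (hpt : ∀ x : X, 0 ≤ ∑ i ∈ s, c i * (A i).indicator (fun _ => (1:ℝ)) x) :
    0 ≤ ∑ i ∈ s, c i * μ (A i) := by
  classical
  set atom : Finset ι → Set X := fun T => {x | ∀ i ∈ s, (x ∈ A i ↔ i ∈ T)} with hatom
  have hdisj : ∀ T ∈ s.powerset, ∀ T' ∈ s.powerset, T ≠ T' → Disjoint (atom T) (atom T') := by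
    intro T hT T' hT' hne
    rw [Finset.mem_powerset] at hT hT'
    rw [Set.disjoint_left]
    intro x hx hx'
    apply hne
    ext i
    constructor
    · intro hi; exact (hx' i (hT hi)).1 ((hx i (hT hi)).2 hi)
    · intro hi; exact (hx i (hT' hi)).1 ((hx' i (hT' hi)).2 hi)
  have hA : ∀ i ∈ s, A i = ⋃ T ∈ s.powerset.filter (fun T => i ∈ T), atom T := by
    intro i hi
    ext x
    simp only [Set.mem_iUnion, Finset.mem_filter, Finset.mem_powerset]
    constructor
    · intro hx
      refine ⟨s.filter (fun j => x ∈ A j), ⟨⟨Finset.filter_subset _ _, ?_⟩, ?_⟩⟩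
      · exact Finset.mem_filter.2 ⟨hi, hx⟩
      · intro j hj
        simp [Finset.mem_filter, hj]
    · rintro ⟨T, ⟨⟨hTs, hiT⟩, hxT⟩⟩
      exact (hxT i hi).2 hiT
  have hμA : ∀ i ∈ s, μ (A i) = ∑ T ∈ s.powerset.filter (fun T => i ∈ T), μ (atom T) := by
    intro i hi
    rw [hA i hi]
    apply hμ.biUnion
    intro T hT T' hT' hne
    exact hdisj T (Finset.mem_filter.1 hT).1 T' (Finset.mem_filter.1 hT').1 hne
  calc (0:ℝ) ≤ ∑ T ∈ s.powerset, (∑ i ∈ T, c i) * μ (atom T) := by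
        apply Finset.sum_nonneg
        intro T hT
        rw [Finset.mem_powerset] at hT
        rcases Set.eq_empty_or_nonempty (atom T) with h | ⟨x, hx⟩
        · rw [h, hμ.empty, mul_zero]
        · apply mul_nonneg _ (hμ.nonneg _)
          have := hpt x
          have hsum : ∑ i ∈ s, c i * (A i).indicator (fun _ => (1:ℝ)) x = ∑ i ∈ T, c i := by
            rw [← Finset.sum_filter_of_ne (f := fun i => c i * (A i).indicator (fun _ => (1:ℝ)) x)
              (p := fun i => x ∈ A i) ?_]
            · have hfT : s.filter (fun i => x ∈ A i) = T := by
                ext i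
                simp only [Finset.mem_filter]
                constructor
                · rintro ⟨hi, hxi⟩; exact (hx i hi).1 hxi
                · intro hi; exact ⟨hT hi, (hx i (hT hi)).2 hi⟩
              rw [hfT]
              apply Finset.sum_congr rfl
              intro i hi
              have : x ∈ A i := (hx i (hT hi)).2 hi
              simp [Set.indicator_of_mem this]
            · intro i hi hne
              by_contra hxi
              simp [Set.indicator_of_notMem hxi] at hne
          linarith [hsum ▸ this]
    _ = ∑ i ∈ s, c i * μ (A i) := by
        have : ∀ i ∈ s, c i * μ (A i)
            = ∑ T ∈ s.powerset, (if i ∈ T then c i * μ (atom T) else 0) := by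
          intro i hi
          rw [hμA i hi, Finset.mul_sum, Finset.sum_filter]
        rw [Finset.sum_congr rfl this, Finset.sum_comm]
        apply Finset.sum_congr rfl
        intro T hT
        rw [Finset.mem_powerset] at hT
        rw [Finset.sum_ite_mem, Finset.sum_mul]
        congr 1
        exact (Finset.inter_eq_right.2 hT).symm

/-- comparison with a constant slack -/
lemma IsMean.compare (hμ : IsMean μ) {ι κ : Type} [DecidableEq ι] [DecidableEq κ]
    (s : Finset ι) (t : Finset κ)
    (c : ι → ℝ) (A : ι → Set X) (d : κ → ℝ) (B : κ → Set X) (e : ℝ)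
    (hpt : ∀ x : X, ∑ i ∈ s, c i * (A i).indicator (fun _ => (1:ℝ)) x
      ≤ e + ∑ j ∈ t, d j * (B j).indicator (fun _ => (1:ℝ)) x) :
    ∑ i ∈ s, c i * μ (A i) ≤ e + ∑ j ∈ t, d j * μ (B j) := by
  classical
  have h := hμ.master (s.disjSum (Finset.insertNone t))
    (Sum.elim (fun i => -(c i)) (fun o => Option.elim o e d))
    (Sum.elim A (fun o => Option.elim o Set.univ B)) ?_
  · rw [Finset.sum_disjSum, Finset.sum_insertNone] at h
    simp only [Sum.elim_inl, Sum.elim_inr, Option.elim] at h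
    have htot : μ Set.univ = 1 := hμ.total
    have : ∑ i ∈ s, -(c i) * μ (A i) = -∑ i ∈ s, c i * μ (A i) := by
      rw [← Finset.sum_neg_distrib]; apply Finset.sum_congr rfl; intros; ring
    rw [this, htot] at h
    linarith
  · intro x
    rw [Finset.sum_disjSum, Finset.sum_insertNone]
    simp only [Sum.elim_inl, Sum.elim_inr, Option.elim]
    have := hpt x
    have hu : (Set.univ : Set X).indicator (fun _ => (1:ℝ)) x = 1 := by simp
    rw [hu]
    have : ∑ i ∈ s, -(c i) * (A i).indicator (fun _ => (1:ℝ)) x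
        = -∑ i ∈ s, c i * (A i).indicator (fun _ => (1:ℝ)) x := by
      rw [← Finset.sum_neg_distrib]; apply Finset.sum_congr rfl; intros; ring
    rw [this]
    linarith [hpt x]

noncomputable def layer (μ : Set X → ℝ) (n : ℕ) (f : X → ℝ) : ℝ :=
  ∑ k ∈ Finset.range n, (n:ℝ)⁻¹ * μ {x | ((k:ℝ)+1)/n ≤ f x}

lemma layer_pointwise {f : X → ℝ} {x : X} (hf0 : 0 ≤ f x) (hf1 : f x ≤ 1)
    {n : ℕ} (hn : 1 ≤ n) :
    ∑ k ∈ Finset.range n, (n:ℝ)⁻¹ * ({y | ((k:ℝ)+1)/n ≤ f y}).indicator (fun _ => (1:ℝ)) x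
      = (⌊(n:ℝ) * f x⌋₊ : ℝ) / n := by
  have hn0 : (0:ℝ) < n := by exact_mod_cast hn
  have hfl : ⌊(n:ℝ) * f x⌋₊ ≤ n := by
    have : (n:ℝ) * f x ≤ n := by nlinarith
    calc ⌊(n:ℝ) * f x⌋₊ ≤ ⌊(n:ℝ)⌋₊ := Nat.floor_le_floor (by exact_mod_cast this)
      _ = n := Nat.floor_natCast n
  have hfilter : (Finset.range n).filter (fun k : ℕ => ((k:ℝ)+1)/n ≤ f x)
      = Finset.range (⌊(n:ℝ) * f x⌋₊) := by
    ext k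
    simp only [Finset.mem_filter, Finset.mem_range]
    constructor
    · rintro ⟨hk, hle⟩
      have : ((k:ℝ)+1) ≤ (n:ℝ) * f x := by
        rw [div_le_iff₀ hn0] at hle; linarith
      have : (k+1 : ℕ) ≤ ⌊(n:ℝ) * f x⌋₊ := Nat.le_floor (by push_cast; linarith)
      omega
    · intro hk
      have hk1 : (k+1:ℕ) ≤ ⌊(n:ℝ) * f x⌋₊ := hk
      have : ((k:ℝ)+1) ≤ (n:ℝ) * f x := by
        have := (Nat.le_floor_iff (by positivity)).1 hk1
        push_cast at this; linarith
      exact ⟨by omega, by rw [div_le_iff₀ hn0]; linarith⟩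
  have : ∀ k ∈ Finset.range n, (n:ℝ)⁻¹ * ({y | ((k:ℝ)+1)/n ≤ f y}).indicator (fun _ => (1:ℝ)) x
      = if ((k:ℝ)+1)/n ≤ f x then (n:ℝ)⁻¹ else 0 := by
    intro k _
    by_cases h : ((k:ℝ)+1)/n ≤ f x
    · rw [if_pos h, Set.indicator_of_mem (show x ∈ {y | ((k:ℝ)+1)/n ≤ f y} from h), mul_one]
    · rw [if_neg h, Set.indicator_of_notMem (show x ∉ {y | ((k:ℝ)+1)/n ≤ f y} from h), mul_zero]
  rw [Finset.sum_congr rfl this, ← Finset.sum_filter, hfilter, Finset.sum_const,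
    Finset.card_range, nsmul_eq_mul]
  rw [div_eq_mul_inv]

lemma floor_div_le {f : X → ℝ} {x : X} (hf0 : 0 ≤ f x) {n : ℕ} (hn : 1 ≤ n) :
    (⌊(n:ℝ) * f x⌋₊ : ℝ) / n ≤ f x := by
  have hn0 : (0:ℝ) < n := by exact_mod_cast hn
  rw [div_le_iff₀ hn0]
  have := Nat.floor_le (by positivity : (0:ℝ) ≤ (n:ℝ) * f x)
  linarith

lemma le_floor_div {f : X → ℝ} {x : X} {n : ℕ} (hn : 1 ≤ n) :
    f x ≤ (⌊(n:ℝ) * f x⌋₊ : ℝ) / n + 1/n := by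
  have hn0 : (0:ℝ) < n := by exact_mod_cast hn
  have := Nat.lt_floor_add_one ((n:ℝ) * f x)
  rw [← add_div, le_div_iff₀ hn0]
  nlinarith

def InUnit (f : X → ℝ) : Prop := ∀ x, 0 ≤ f x ∧ f x ≤ 1

lemma layer_le (hμ : IsMean μ) {n m : ℕ} (hn : 1 ≤ n) (hm : 1 ≤ m) {f g : X → ℝ}
    (hf : InUnit f) (hg : InUnit g) (e : ℝ) (hfg : ∀ x, f x ≤ g x + e) :
    layer μ n f ≤ (e + 1/m) + layer μ m g := by
  apply hμ.compare (Finset.range n) (Finset.range m) _ _ _ _ (e + 1/m)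
  intro x
  rw [layer_pointwise (hf x).1 (hf x).2 hn, layer_pointwise (hg x).1 (hg x).2 hm]
  have h1 := floor_div_le (f := f) (hf x).1 hn
  have h2 := le_floor_div (f := g) (x := x) hm
  linarith [hfg x]

lemma layer_nonneg (hμ : IsMean μ) (n : ℕ) (f : X → ℝ) : 0 ≤ layer μ n f := by
  apply Finset.sum_nonneg
  intro k _
  have : (0:ℝ) ≤ (n:ℝ)⁻¹ := by positivity
  exact mul_nonneg this (hμ.nonneg _)

/-- layer of sum vs sum of layers -/
lemma layer_add_le (hμ : IsMean μ) {n : ℕ} (hn : 1 ≤ n) {f g : X → ℝ}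
    (hf : InUnit f) (hg : InUnit g) (hfg : InUnit (fun x => f x + g x)) :
    layer μ n (fun x => f x + g x) ≤ 2/n + (layer μ n f + layer μ n g) := by
  classical
  have h := hμ.compare (Finset.range n) ((Finset.range n).disjSum (Finset.range n))
    (fun _ => (n:ℝ)⁻¹) (fun k => {x | ((k:ℝ)+1)/n ≤ f x + g x})
    (Sum.elim (fun _ => (n:ℝ)⁻¹) (fun _ => (n:ℝ)⁻¹))
    (Sum.elim (fun k => {x | ((k:ℝ)+1)/n ≤ f x}) (fun k => {x | ((k:ℝ)+1)/n ≤ g x}))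
    (2/n) ?_
  · rw [Finset.sum_disjSum] at h
    simpa [layer] using h
  · intro x
    rw [Finset.sum_disjSum]
    simp only [Sum.elim_inl, Sum.elim_inr]
    rw [layer_pointwise (f := fun x => f x + g x) (x := x) (hfg x).1 (hfg x).2 hn,
      layer_pointwise (f := f) (x := x) (hf x).1 (hf x).2 hn,
      layer_pointwise (f := g) (x := x) (hg x).1 (hg x).2 hn]
    have h1 := floor_div_le (f := fun x => f x + g x) (x := x) (hfg x).1 hn
    have h2 := le_floor_div (f := f) (x := x) hn
    have h3 := le_floor_div (f := g) (x := x) hn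
    have hnn : (0:ℝ) < n := by exact_mod_cast hn
    have : (2:ℝ)/n = 1/n + 1/n := by ring
    linarith

lemma add_le_layer (hμ : IsMean μ) {n : ℕ} (hn : 1 ≤ n) {f g : X → ℝ}
    (hf : InUnit f) (hg : InUnit g) (hfg : InUnit (fun x => f x + g x)) :
    layer μ n f + layer μ n g ≤ 3/n + layer μ n (fun x => f x + g x) := by
  classical
  have h := hμ.compare ((Finset.range n).disjSum (Finset.range n)) (Finset.range n)
    (Sum.elim (fun _ => (n:ℝ)⁻¹) (fun _ => (n:ℝ)⁻¹))
    (Sum.elim (fun k => {x | ((k:ℝ)+1)/n ≤ f x}) (fun k => {x | ((k:ℝ)+1)/n ≤ g x}))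
    (fun _ => (n:ℝ)⁻¹) (fun k => {x | ((k:ℝ)+1)/n ≤ f x + g x})
    (3/n) ?_
  · rw [Finset.sum_disjSum] at h
    simpa [layer] using h
  · intro x
    rw [Finset.sum_disjSum]
    simp only [Sum.elim_inl, Sum.elim_inr]
    rw [layer_pointwise (f := fun x => f x + g x) (x := x) (hfg x).1 (hfg x).2 hn,
      layer_pointwise (f := f) (x := x) (hf x).1 (hf x).2 hn,
      layer_pointwise (f := g) (x := x) (hg x).1 (hg x).2 hn]
    have h1 := le_floor_div (f := fun x => f x + g x) (x := x) hn
    have h2 := floor_div_le (f := f) (x := x) (hf x).1 hn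
    have h3 := floor_div_le (f := g) (x := x) (hg x).1 hn
    have hinv : (0:ℝ) ≤ (n:ℝ)⁻¹ := by positivity
    have h3n : (3:ℝ)/n = 1/n + 2 * (n:ℝ)⁻¹ := by ring
    rw [h3n]
    linarith

/-- helper: a ≤ b + c/n for all n ≥ 1 implies a ≤ b -/
lemma le_of_forall_le_add_div {a b c : ℝ} (hc : 0 ≤ c)
    (h : ∀ n : ℕ, 1 ≤ n → a ≤ b + c / n) : a ≤ b := by
  by_contra h'
  push_neg at h'
  obtain ⟨n, hn⟩ := exists_nat_gt (c / (a - b))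
  have hab : 0 < a - b := by linarith
  have h1 : 1 ≤ n + 1 := by omega
  have := h (n+1) h1
  have hn1 : c / (a-b) < ((n:ℝ)+1) := by push_cast at hn ⊢; linarith
  have hpos : (0:ℝ) < (n:ℝ)+1 := by positivity
  have : c / ((n:ℝ)+1) < a - b := by
    rw [div_lt_iff₀ hpos]
    rw [div_lt_iff₀ hab] at hn1
    linarith
  have h2 := h (n+1) h1
  push_cast at h2
  linarith
  
noncomputable def intg (μ : Set X → ℝ) (f : X → ℝ) : ℝ :=
  sSup {r | ∃ n : ℕ, 1 ≤ n ∧ r = layer μ n f - 1/n}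

lemma le_intg (hμ : IsMean μ) {f : X → ℝ} (hf : InUnit f) {m : ℕ} (hm : 1 ≤ m) :
    layer μ m f - 1/m ≤ intg μ f := by
  apply le_csSup
  · refine ⟨layer μ 1 f + 1, ?_⟩
    rintro r ⟨n, hn, rfl⟩
    have := layer_le hμ hn (le_refl 1) hf hf 0 (fun x => by linarith [(hf x).1])
    have hinv : (0:ℝ) ≤ (n:ℝ)⁻¹ := by positivity
    simp only [Nat.cast_one] at this
    have h1n : (0:ℝ) ≤ 1/n := by positivity
    linarith
  · exact ⟨m, hm, rfl⟩

lemma intg_le (hμ : IsMean μ) {f : X → ℝ} (hf : InUnit f) {m : ℕ} (hm : 1 ≤ m) :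
    intg μ f ≤ layer μ m f + 1/m := by
  apply csSup_le
  · exact ⟨layer μ 1 f - 1, 1, le_refl 1, by norm_num⟩
  · rintro r ⟨n, hn, rfl⟩
    have := layer_le hμ hn hm hf hf 0 (fun x => by linarith [(hf x).1])
    have h1n : (0:ℝ) ≤ 1/n := by positivity
    linarith

lemma intg_nonneg (hμ : IsMean μ) {f : X → ℝ} (hf : InUnit f) : 0 ≤ intg μ f := by
  have key : ∀ n : ℕ, 1 ≤ n → -intg μ f ≤ 0 + 1 / n := by
    intro n hn
    have h1 := le_intg hμ hf hn
    have h2 := layer_nonneg hμ n f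
    linarith
  linarith [le_of_forall_le_add_div (by norm_num : (0:ℝ) ≤ 1) key]

lemma intg_one (hμ : IsMean μ) : intg μ (fun _ => (1:ℝ)) = 1 := by
  have hone : InUnit (fun _ : X => (1:ℝ)) := fun x => by norm_num
  have hlayer : ∀ n : ℕ, 1 ≤ n → layer μ n (fun _ => (1:ℝ)) = 1 := by
    intro n hn
    have : ∀ k ∈ Finset.range n, (n:ℝ)⁻¹ * μ {x : X | ((k:ℝ)+1)/n ≤ 1} = (n:ℝ)⁻¹ := by
      intro k hk
      have hk' : k < n := Finset.mem_range.1 hk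
      have hn0 : (0:ℝ) < n := by exact_mod_cast Nat.lt_of_lt_of_le Nat.zero_lt_one hn
      have hset : {x : X | ((k:ℝ)+1)/n ≤ 1} = Set.univ := by
        ext x; simp only [Set.mem_setOf_eq, Set.mem_univ, iff_true]
        rw [div_le_one hn0]
        have : (k:ℝ) + 1 ≤ n := by exact_mod_cast hk'
        linarith
      rw [hset, hμ.total, mul_one]
    rw [layer, Finset.sum_congr rfl this, Finset.sum_const, Finset.card_range, nsmul_eq_mul]
    field_simp
  have h1 : ∀ n : ℕ, 1 ≤ n → intg μ (fun _ => (1:ℝ)) ≤ 1 + 1/n := by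
    intro n hn; have := intg_le hμ hone hn; rw [hlayer n hn] at this; exact this
  have h2 : ∀ n : ℕ, 1 ≤ n → 1 ≤ intg μ (fun _ => (1:ℝ)) + 1/n := by
    intro n hn; have := le_intg hμ hone hn; rw [hlayer n hn] at this; linarith
  have ha := le_of_forall_le_add_div (by norm_num : (0:ℝ) ≤ 1) (fun n hn => by
    have := h1 n hn; simpa [div_eq_mul_inv] using this)
  have hb : 1 ≤ intg μ (fun _ => (1:ℝ)) :=
    le_of_forall_le_add_div (by norm_num : (0:ℝ) ≤ 1) (fun n hn => by
      have := h2 n hn; linarith)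
  linarith

lemma intg_add (hμ : IsMean μ) {f g : X → ℝ} (hf : InUnit f) (hg : InUnit g)
    (hfg : InUnit (fun x => f x + g x)) :
    intg μ (fun x => f x + g x) = intg μ f + intg μ g := by
  have le1 : intg μ (fun x => f x + g x) ≤ intg μ f + intg μ g := by
    apply le_of_forall_le_add_div (by norm_num : (0:ℝ) ≤ 5)
    intro n hn
    have h1 := intg_le hμ hfg hn
    have h2 := layer_add_le hμ hn hf hg hfg
    have h3 := le_intg hμ hf hn
    have h4 := le_intg hμ hg hn
    have : (5:ℝ)/n = 1/n + 2/n + 1/n + 1/n := by ring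
    linarith
  have le2 : intg μ f + intg μ g ≤ intg μ (fun x => f x + g x) := by
    apply le_of_forall_le_add_div (by norm_num : (0:ℝ) ≤ 6)
    intro n hn
    have h1 := intg_le hμ hf hn
    have h2 := intg_le hμ hg hn
    have h3 := add_le_layer hμ hn hf hg hfg
    have h4 := le_intg hμ hfg hn
    have : (6:ℝ)/n = 1/n + 1/n + 3/n + 1/n := by ring
    linarith
  linarith

lemma intg_comp (μ : Set X → ℝ) {τ : X → X} (hτ : ∀ A : Set X, μ (τ ⁻¹' A) = μ A)
    (f : X → ℝ) : intg μ (fun x => f (τ x)) = intg μ f := by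
  have hl : ∀ n, layer μ n (fun x => f (τ x)) = layer μ n f := by
    intro n
    apply Finset.sum_congr rfl
    intro k _
    congr 1
    have : {x | ((k:ℝ)+1)/n ≤ f (τ x)} = τ ⁻¹' {x | ((k:ℝ)+1)/n ≤ f x} := rfl
    rw [this, hτ]
  unfold intg
  congr 1
  ext r
  constructor
  · rintro ⟨n, hn, rfl⟩; exact ⟨n, hn, by rw [hl]⟩
  · rintro ⟨n, hn, rfl⟩; exact ⟨n, hn, by rw [hl]⟩

lemma intg_congr (μ : Set X → ℝ) {f g : X → ℝ} (h : ∀ x, f x = g x) :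
    intg μ f = intg μ g := by
  rw [show f = g from funext h]

/-- amenability pulls back along injective homomorphisms -/
lemma isAmenable_of_injective {H G : Type*} [Group H] [Group G] (f : H →* G)
    (hf : Function.Injective f) (hG : IsAmenable G) : IsAmenable H := by
  classical
  obtain ⟨μ, h0, h1, hadd, hinv⟩ := hG
  set R := QuotientGroup.rightRel f.range with hR
  have hmem : ∀ g : G, g * ((Quotient.mk R g).out)⁻¹ ∈ f.range := by
    intro g
    have : (Quotient.mk R ((Quotient.mk R g).out)) = Quotient.mk R g := Quotient.out_eq _
    have hrel := Quotient.exact this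
    exact QuotientGroup.rightRel_apply.1 hrel
  set q : G → H := fun g => Classical.choose (hmem g) with hq
  have hqs : ∀ g : G, f (q g) = g * ((Quotient.mk R g).out)⁻¹ :=
    fun g => Classical.choose_spec (hmem g)
  have hout : ∀ (h : H) (g : G), (Quotient.mk R (f h * g)).out = (Quotient.mk R g).out := by
    intro h g
    congr 1
    apply Quotient.sound
    show (QuotientGroup.rightRel f.range) (f h * g) g
    rw [QuotientGroup.rightRel_apply]
    show g * (f h * g)⁻¹ ∈ f.range
    refine ⟨h⁻¹, by rw [map_inv]; group⟩
  have hqmul : ∀ (h : H) (g : G), q (f h * g) = h * q g := by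
    intro h g
    apply hf
    rw [hqs, map_mul, hqs, hout]
    group
  refine ⟨fun A => μ (q ⁻¹' A), fun A => h0 _, ?_, ?_, ?_⟩
  · show μ (q ⁻¹' Set.univ) = 1
    rw [Set.preimage_univ, h1]
  · intro A B hAB
    show μ (q ⁻¹' (A ∪ B)) = μ (q ⁻¹' A) + μ (q ⁻¹' B)
    rw [Set.preimage_union]
    exact hadd _ _ (Disjoint.preimage q hAB)
  · intro h A
    have himg : q ⁻¹' ((h * ·) '' A) = (f h * ·) '' (q ⁻¹' A) := by
      ext x
      simp only [Set.mem_preimage, Set.mem_image]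
      constructor
      · rintro ⟨a, ha, hax⟩
        refine ⟨(f h)⁻¹ * x, ?_, by group⟩
        show q ((f h)⁻¹ * x) ∈ A
        have : (f h)⁻¹ * x = f h⁻¹ * x := by rw [map_inv]
        rw [this, hqmul]
        have : q x = h * a := hax.symm
        rw [this]
        simpa using ha
      · rintro ⟨y, hy, rfl⟩
        exact ⟨q y, hy, (hqmul h y).symm⟩
    show μ (q ⁻¹' ((h * ·) '' A)) = μ (q ⁻¹' A)
    rw [himg, hinv]

/-- product of amenable groups is amenable -/
lemma isAmenable_prod {G H : Type*} [Group G] [Group H]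
    (hG : IsAmenable G) (hH : IsAmenable H) : IsAmenable (G × H) := by
  obtain ⟨μ, h0, h1, hadd, hinv⟩ := hG
  obtain ⟨ν, k0, k1, kadd, kinv⟩ := hH
  have hμ : IsMean μ := ⟨h0, h1, hadd⟩
  have hν : IsMean ν := ⟨k0, k1, kadd⟩
  -- slice of a set
  set sl : Set (G × H) → H → Set G := fun A h => {g | (g, h) ∈ A} with hsl
  have hInUnit : ∀ A : Set (G × H), InUnit (fun h => μ (sl A h)) := by
    intro A h
    exact ⟨h0 _, hμ.le_one _⟩
  refine ⟨fun A => intg ν (fun h => μ (sl A h)), ?_, ?_, ?_, ?_⟩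
  · intro A
    exact intg_nonneg hν (hInUnit A)
  · have : ∀ h : H, μ (sl Set.univ h) = 1 := by
      intro h
      have : sl Set.univ h = Set.univ := by ext g; simp [hsl]
      rw [this, h1]
    show intg ν (fun h => μ (sl Set.univ h)) = 1
    rw [intg_congr ν this, intg_one hν]
  · intro A B hAB
    have hslu : ∀ h, sl (A ∪ B) h = sl A h ∪ sl B h := by
      intro h; ext g; simp [hsl]
    have hsld : ∀ h, Disjoint (sl A h) (sl B h) := by
      intro h
      rw [Set.disjoint_left]
      intro g hgA hgB
      exact Set.disjoint_left.1 hAB hgA hgB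
    have heq : ∀ h : H, μ (sl (A ∪ B) h) = μ (sl A h) + μ (sl B h) := by
      intro h; rw [hslu]; exact hadd _ _ (hsld h)
    show intg ν (fun h => μ (sl (A ∪ B) h))
      = intg ν (fun h => μ (sl A h)) + intg ν (fun h => μ (sl B h))
    rw [intg_congr ν heq]
    exact intg_add hν (hInUnit A) (hInUnit B)
      (fun h => by
        have := hInUnit (A ∪ B) h
        simp only at this ⊢
        rw [← heq h]; exact this)
  · rintro ⟨g0, h0'⟩ A
    have hslice : ∀ h : H, sl (((g0, h0') * ·) '' A) h = (g0 * ·) '' (sl A (h0'⁻¹ * h)) := by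
      intro h
      ext g
      simp only [hsl, Set.mem_setOf_eq, Set.mem_image]
      constructor
      · rintro ⟨⟨a, b⟩, hab, heq⟩
        have h1 : g0 * a = g ∧ h0' * b = h := by
          constructor <;> [exact congrArg Prod.fst heq; exact congrArg Prod.snd heq]
        refine ⟨a, ?_, h1.1⟩
        show (a, h0'⁻¹ * h) ∈ A
        have : h0'⁻¹ * h = b := by rw [← h1.2]; group
        rwa [this]
      · rintro ⟨a, ha, rfl⟩
        exact ⟨(a, h0'⁻¹ * h), ha, by simp⟩
    have step1 : (fun h => μ (sl (((g0, h0') * ·) '' A) h))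
        = fun h => μ (sl A (h0'⁻¹ * h)) := by
      funext h
      rw [hslice]
      exact hinv g0 _
    show intg ν (fun h => μ (sl (((g0, h0') * ·) '' A) h)) = intg ν (fun h => μ (sl A h))
    rw [intg_congr ν (fun h => congrFun step1 h)]
    have hτ : ∀ B : Set H, ν ((h0'⁻¹ * ·) ⁻¹' B) = ν B := by
      intro B
      have : (h0'⁻¹ * ·) ⁻¹' B = (h0' * ·) '' B := by
        ext x
        simp only [Set.mem_preimage, Set.mem_image]
        constructor
        · intro hx; exact ⟨h0'⁻¹ * x, hx, by group⟩
        · rintro ⟨y, hy, rfl⟩; simpa using hy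
      rw [this, kinv]
    exact intg_comp ν hτ (fun h => μ (sl A h))

lemma getVert_map {V : Type} {G : SimpleGraph V} (f : G →g G) {u v : V}
    (p : G.Walk u v) (i : ℕ) : (p.map f).getVert i = f (p.getVert i) := by
  induction p generalizing i with
  | nil => simp [SimpleGraph.Walk.getVert_of_length_le]
  | cons h q ih =>
    cases i with
    | zero => simp [SimpleGraph.Walk.getVert_zero]
    | succ n =>
      rw [SimpleGraph.Walk.map_cons, SimpleGraph.Walk.getVert_cons_succ,
        SimpleGraph.Walk.getVert_cons_succ, ih]

theorem forward {Γ Δ : Type} [Group Γ] [Group Δ] (hΔ : ¬ IsAmenable Δ)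
    (h : SplitsOverAmenable (Γ × Δ)) : SplitsOverAmenable Δ := by
  obtain ⟨V, T, φ, htree, hadj, hnoinv, hnofix, hedge⟩ := h
  refine ⟨V, T, φ.comp (MonoidHom.inr Γ Δ), htree, ?_, ?_, ?_, ?_⟩
  · intro g u v h
    exact hadj _ u v h
  · rintro ⟨δ, u, v, huv, h1, h2⟩
    exact hnoinv ⟨(1, δ), u, v, huv, h1, h2⟩
  · rintro ⟨v, hv⟩
    have hv' : ∀ δ : Δ, φ (1, δ) v = v := fun δ => hv δ
    set F : Set V := {u | ∀ δ : Δ, φ (1, δ) u = u} with hF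
    have hvF : v ∈ F := hv'
    have hcomm : ∀ (γ : Γ) (δ : Δ) (u : V),
        φ (1, δ) (φ (γ, 1) u) = φ (γ, 1) (φ (1, δ) u) := by
      intro γ δ u
      have h1 : ((1, δ) * (γ, (1:Δ)) : Γ × Δ) = ((γ, (1:Δ)) * (1, δ) : Γ × Δ) := by
        ext <;> simp
      calc φ (1, δ) (φ (γ,1) u) = φ ((1,δ) * (γ,1)) u := by rw [map_mul]; rfl
        _ = φ ((γ,1) * (1,δ)) u := by rw [h1]
        _ = φ (γ,1) (φ (1,δ) u) := by rw [map_mul]; rfl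
    have hGamma : ∀ (γ : Γ) (u : V), u ∈ F → φ (γ, 1) u ∈ F := by
      intro γ u hu δ
      rw [hcomm γ δ u, hu δ]
    by_cases htwo : ∃ u ∈ F, ∃ w ∈ F, u ≠ w
    · obtain ⟨u, hu, w, hw, hne⟩ := htwo
      obtain ⟨x, hx, hux⟩ : ∃ x, x ∈ F ∧ T.Adj u x := by
        obtain ⟨_, hpath⟩ := SimpleGraph.isTree_iff_existsUnique_path.1 htree
        obtain ⟨p, hp, huniq⟩ := hpath u w
        have hlen : 0 < p.length := by
          rcases Nat.eq_zero_or_pos p.length with h0 | h0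
          · exact absurd (SimpleGraph.Walk.eq_of_length_eq_zero h0) hne
          · exact h0
        refine ⟨p.getVert 1, ?_, ?_⟩
        · intro δ
          set f : T →g T := ⟨φ (1, δ), fun h => hadj (1, δ) _ _ h⟩ with hf
          have hinj : Function.Injective f := (φ (1, δ)).injective
          set q : T.Walk u w := (p.map f).copy (hu δ) (hw δ) with hqdef
          have hq : q.IsPath := by
            rw [hqdef, SimpleGraph.Walk.isPath_copy]
            exact SimpleGraph.Walk.map_isPath_of_injective hinj hp
          have := huniq q hq
          have hgv : q.getVert 1 = p.getVert 1 := by rw [this]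
          rw [hqdef, SimpleGraph.Walk.getVert_copy, getVert_map] at hgv
          exact hgv
        · have h01 := p.adj_getVert_succ (i := 0) hlen
          rwa [SimpleGraph.Walk.getVert_zero] at h01
      apply hΔ
      set S := (MulAction.stabilizer (Equiv.Perm V) u ⊓
        MulAction.stabilizer (Equiv.Perm V) x).comap φ with hS
      have hmem : ∀ δ : Δ, ((1, δ) : Γ × Δ) ∈ S := by
        intro δ
        refine ⟨?_, ?_⟩
        · show φ (1, δ) • u = u
          rw [Equiv.Perm.smul_def]
          exact hu δ
        · show φ (1, δ) • x = x
          rw [Equiv.Perm.smul_def]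
          exact hx δ
      refine isAmenable_of_injective
        ({ toFun := fun δ => ⟨(1, δ), hmem δ⟩,
           map_one' := rfl,
           map_mul' := fun a b => by
             apply Subtype.ext
             show ((1 : Γ), a * b) = ((1 : Γ), a) * (1, b)
             ext <;> simp } : Δ →* S) ?_ (hedge u x hux)
      intro a b hab
      have := congrArg (fun z : S => (z : Γ × Δ).2) hab
      exact this
    · push_neg at htwo
      apply hnofix
      refine ⟨v, ?_⟩
      rintro ⟨γ, δ⟩
      have h1 : φ (γ, 1) v = v := htwo _ (hGamma γ v hvF) v hvF
      have hsplit : ((γ, δ) : Γ × Δ) = (γ, 1) * (1, δ) := by ext <;> simp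
      calc φ (γ, δ) v = φ ((γ,1) * (1,δ)) v := by rw [← hsplit]
        _ = φ (γ,1) (φ (1,δ) v) := by rw [map_mul]; rfl
        _ = φ (γ,1) v := by rw [hv' δ]
        _ = v := h1
  · intro u v huv
    set S := MulAction.stabilizer (Equiv.Perm V) u ⊓ MulAction.stabilizer (Equiv.Perm V) v
      with hSdef
    have hmem : ∀ x : ↥(S.comap (φ.comp (MonoidHom.inr Γ Δ))),
        ((1, (x : Δ)) : Γ × Δ) ∈ S.comap φ := fun x => x.2
    refine isAmenable_of_injective
      ({ toFun := fun x => ⟨(1, (x : Δ)), hmem x⟩,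
         map_one' := rfl,
         map_mul' := fun a b => by
           apply Subtype.ext
           show ((1 : Γ), (a : Δ) * b) = (1, (a : Δ)) * (1, (b : Δ))
           ext <;> simp } : ↥(S.comap (φ.comp (MonoidHom.inr Γ Δ))) →* ↥(S.comap φ)) ?_
      (hedge u v huv)
    intro a b hab
    apply Subtype.ext
    have := congrArg (fun z : ↥(S.comap φ) => (z : Γ × Δ).2) hab
    exact this

theorem backward {Γ Δ : Type} [Group Γ] [Group Δ] (hΓ : IsAmenable Γ)
    (h : SplitsOverAmenable Δ) : SplitsOverAmenable (Γ × Δ) := by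
  obtain ⟨V, T, φ, htree, hadj, hnoinv, hnofix, hedge⟩ := h
  refine ⟨V, T, φ.comp (MonoidHom.snd Γ Δ), htree, ?_, ?_, ?_, ?_⟩
  · intro g u v h
    exact hadj _ u v h
  · rintro ⟨⟨γ, δ⟩, u, v, huv, h1, h2⟩
    exact hnoinv ⟨δ, u, v, huv, h1, h2⟩
  · rintro ⟨v, hv⟩
    exact hnofix ⟨v, fun δ => hv (1, δ)⟩
  · intro u v huv
    set S := MulAction.stabilizer (Equiv.Perm V) u ⊓ MulAction.stabilizer (Equiv.Perm V) v
      with hSdef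
    have hmem : ∀ x : ↥(S.comap (φ.comp (MonoidHom.snd Γ Δ))),
        ((x : Γ × Δ).2) ∈ S.comap φ := fun x => x.2
    refine isAmenable_of_injective
      ({ toFun := fun x => (((x : Γ × Δ).1 : Γ), (⟨(x : Γ × Δ).2, hmem x⟩ : ↥(S.comap φ))),
         map_one' := rfl,
         map_mul' := fun a b => by
           apply Prod.ext
           · rfl
           · apply Subtype.ext; rfl } :
        ↥(S.comap (φ.comp (MonoidHom.snd Γ Δ))) →* Γ × ↥(S.comap φ)) ?_
      (isAmenable_prod hΓ (hedge u v huv))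
    intro a b hab
    have h1 : (a : Γ × Δ).1 = (b : Γ × Δ).1 :=
      congrArg (fun z : Γ × ↥(S.comap φ) => z.1) hab
    have h2 : (a : Γ × Δ).2 = (b : Γ × Δ).2 :=
      congrArg (fun z : Γ × ↥(S.comap φ) => (z.2 : Δ)) hab
    exact Subtype.ext (Prod.ext h1 h2)
    
end AmenAux

/-- For `Γ` amenable and `Δ` non-amenable, the direct product `Γ × Δ` splits over an
amenable subgroup if and only if `Δ` does. -/
theorem stmt7 {Γ Δ : Type} [Group Γ] [Group Δ]
    (hΓ : IsAmenable Γ) (hΔ : ¬ IsAmenable Δ) :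
    SplitsOverAmenable (Γ × Δ) ↔ SplitsOverAmenable Δ :=
  ⟨AmenAux.forward hΔ, AmenAux.backward hΓ⟩
end

section
/- Let g be an element of a graph product Γ(G) over a finite simple graph G = (V,E). Define tail(g) as the set of vertices v ∈ V such that some graphically reduced writing of g ends with a syllable from Γ_v. Then tail(g) is a clique of G: any two distinct vertices in tail(g) are adjacent. -/
open Monoid

/-- The commutation relators of a graph product: commutators of elements of vertex
groups attached to adjacent vertices. -/
def gpRels {V : Type} (G : SimpleGraph V) (Γ : V → Type) [∀ v, Group (Γ v)] :
    Set (CoprodI Γ) :=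
  {w | ∃ (u v : V) (a : Γ u) (b : Γ v), G.Adj u v ∧
    w = CoprodI.of a * CoprodI.of b * (CoprodI.of a)⁻¹ * (CoprodI.of b)⁻¹}

/-- The graph product of the groups `Γ v` over the graph `G`: the free product
modulo the commutation relations given by the edges of `G`. -/
def GraphProduct {V : Type} (G : SimpleGraph V) (Γ : V → Type) [∀ v, Group (Γ v)] :
    Type :=
  CoprodI Γ ⧸ Subgroup.normalClosure (gpRels G Γ)

instance {V : Type} (G : SimpleGraph V) (Γ : V → Type) [∀ v, Group (Γ v)] :
    Group (GraphProduct G Γ) :=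
  QuotientGroup.Quotient.group _

/-- The canonical projection from the free product to the graph product. -/
def gpMk {V : Type} (G : SimpleGraph V) (Γ : V → Type) [∀ v, Group (Γ v)] :
    CoprodI Γ →* GraphProduct G Γ :=
  QuotientGroup.mk' _

/-- Evaluation of a writing (a list of syllables) in the graph product. -/
def evalWord {V : Type} (G : SimpleGraph V) (Γ : V → Type) [∀ v, Group (Γ v)]
    (w : List (Σ v : V, Γ v)) : GraphProduct G Γ :=
  (w.map fun p => gpMk G Γ (CoprodI.of p.2)).prod

/-- The elementary rewriting operations on writings: merging two adjacent syllables
from the same vertex group, deleting an identity syllable, and swapping adjacent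
syllables from adjacent (commuting) vertex groups. -/
inductive WStep {V : Type} (G : SimpleGraph V) (Γ : V → Type) [∀ v, Group (Γ v)] :
    List (Σ v : V, Γ v) → List (Σ v : V, Γ v) → Prop
  | merge (w₁ w₂ : List (Σ v : V, Γ v)) (v : V) (a b : Γ v) :
      WStep G Γ (w₁ ++ ⟨v, a⟩ :: ⟨v, b⟩ :: w₂) (w₁ ++ ⟨v, a * b⟩ :: w₂)
  | delete (w₁ w₂ : List (Σ v : V, Γ v)) (v : V) :
      WStep G Γ (w₁ ++ ⟨v, (1 : Γ v)⟩ :: w₂) (w₁ ++ w₂)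
  | swap (w₁ w₂ : List (Σ v : V, Γ v)) (u v : V) (a : Γ u) (b : Γ v)
      (h : G.Adj u v) :
      WStep G Γ (w₁ ++ ⟨u, a⟩ :: ⟨v, b⟩ :: w₂) (w₁ ++ ⟨v, b⟩ :: ⟨u, a⟩ :: w₂)

/-- A writing is graphically reduced if no sequence of elementary operations can
shorten it. -/
def ReducedWord {V : Type} (G : SimpleGraph V) (Γ : V → Type) [∀ v, Group (Γ v)]
    (w : List (Σ v : V, Γ v)) : Prop :=
  ∀ w', Relation.ReflTransGen (WStep G Γ) w w' → w.length ≤ w'.length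

/-- `tail g` is the set of vertices `v` such that some graphically reduced writing
of `g` ends with a syllable from `Γ v`. -/
def tail {V : Type} (G : SimpleGraph V) (Γ : V → Type) [∀ v, Group (Γ v)]
    (g : GraphProduct G Γ) : Set V :=
  {v | ∃ (w : List (Σ v : V, Γ v)) (p : Σ v : V, Γ v),
    ReducedWord G Γ w ∧ evalWord G Γ w = g ∧ w.getLast? = some p ∧ p.1 = v}


namespace GPAux
set_option linter.unusedSectionVars false

variable {V : Type} (G : SimpleGraph V) (Γ : V → Type) [∀ v, Group (Γ v)]

/-- A single swap of two adjacent commuting syllables. -/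
def SwapS (w w' : List (Σ v : V, Γ v)) : Prop :=
  ∃ (w₁ w₂ : List (Σ v : V, Γ v)) (u v : V) (a : Γ u) (b : Γ v),
    G.Adj u v ∧ w = w₁ ++ ⟨u, a⟩ :: ⟨v, b⟩ :: w₂ ∧ w' = w₁ ++ ⟨v, b⟩ :: ⟨u, a⟩ :: w₂

/-- Swap equivalence. -/
def SEq : List (Σ v : V, Γ v) → List (Σ v : V, Γ v) → Prop :=
  Relation.ReflTransGen (SwapS G Γ)

variable {G Γ}

theorem SwapS.symm {w w' : List (Σ v : V, Γ v)} (h : SwapS G Γ w w') : SwapS G Γ w' w := by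
  obtain ⟨w₁, w₂, u, v, a, b, hadj, rfl, rfl⟩ := h
  exact ⟨w₁, w₂, v, u, b, a, hadj.symm, rfl, rfl⟩

theorem SEq.refl (w : List (Σ v : V, Γ v)) : SEq G Γ w w := Relation.ReflTransGen.refl

theorem SEq.symm {w w' : List (Σ v : V, Γ v)} (h : SEq G Γ w w') : SEq G Γ w' w :=
  haveI : Std.Symm (SwapS G Γ) := ⟨fun _ _ => SwapS.symm⟩
  (Relation.ReflTransGen.symmetric (r := SwapS G Γ)).symm _ _ h

theorem SEq.trans {w₁ w₂ w₃ : List (Σ v : V, Γ v)} (h : SEq G Γ w₁ w₂) (h' : SEq G Γ w₂ w₃) :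
    SEq G Γ w₁ w₃ := Relation.ReflTransGen.trans h h'

theorem SwapS.single {w w' : List (Σ v : V, Γ v)} (h : SwapS G Γ w w') : SEq G Γ w w' :=
  Relation.ReflTransGen.single h

theorem SwapS.cons (p : Σ v : V, Γ v) {w w' : List (Σ v : V, Γ v)} (h : SwapS G Γ w w') :
    SwapS G Γ (p :: w) (p :: w') := by
  obtain ⟨w₁, w₂, u, v, a, b, hadj, rfl, rfl⟩ := h
  exact ⟨p :: w₁, w₂, u, v, a, b, hadj, rfl, rfl⟩

theorem SEq.cons (p : Σ v : V, Γ v) {w w' : List (Σ v : V, Γ v)} (h : SEq G Γ w w') :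
    SEq G Γ (p :: w) (p :: w') := by
  induction h with
  | refl => exact SEq.refl _
  | tail _ hs ih => exact ih.trans (hs.cons p).single

theorem SEq.append_left (l : List (Σ v : V, Γ v)) {w w' : List (Σ v : V, Γ v)}
    (h : SEq G Γ w w') : SEq G Γ (l ++ w) (l ++ w') := by
  induction l with
  | nil => exact h
  | cons p l ih => exact ih.cons p

variable (G Γ) in
/-- `FD v c w r` : the word `w` has a front-available syllable `⟨v, c⟩`, every
syllable before it being at a vertex adjacent to `v`, and `r` is the word obtained
by removing this syllable. -/
inductive FD (v : V) (c : Γ v) : List (Σ v : V, Γ v) → List (Σ v : V, Γ v) → Prop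
  | head (w : List (Σ v : V, Γ v)) : FD v c (⟨v, c⟩ :: w) w
  | cons (p : Σ v : V, Γ v) {w r : List (Σ v : V, Γ v)} (h : G.Adj v p.1)
      (h2 : FD v c w r) : FD v c (p :: w) (p :: r)

theorem FD.unique {v : V} {c c' : Γ v} {w r r' : List (Σ v : V, Γ v)}
    (h : FD G Γ v c w r) (h' : FD G Γ v c' w r') : c = c' ∧ r = r' := by
  induction h generalizing r' with
  | head w =>
    cases h' with
    | head => exact ⟨rfl, rfl⟩
    | cons p hadj h2 => exact absurd hadj (by simp [G.irrefl])
  | cons p hadj h2 ih =>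
    cases h' with
    | head => exact absurd hadj (by simp [G.irrefl])
    | cons p hadj' h2' => obtain ⟨hc, hr⟩ := ih h2'; exact ⟨hc, by rw [hr]⟩

theorem FD.length {v : V} {c : Γ v} {w r : List (Σ v : V, Γ v)} (h : FD G Γ v c w r) :
    w.length = r.length + 1 := by
  induction h with
  | head w => rfl
  | cons p hadj h2 ih => simp [ih]

theorem FD.mem {v : V} {c : Γ v} {w r : List (Σ v : V, Γ v)} (h : FD G Γ v c w r) :
    (⟨v, c⟩ : Σ v : V, Γ v) ∈ w := by
  induction h with
  | head w => exact List.mem_cons_self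
  | cons p hadj h2 ih => exact List.mem_cons_of_mem _ ih

/-- From a front decomposition, the word is swap-equivalent to one starting with the
front syllable. -/
theorem FD.toFront {v : V} {c : Γ v} {w r : List (Σ v : V, Γ v)} (h : FD G Γ v c w r) :
    SEq G Γ w (⟨v, c⟩ :: r) := by
  induction h with
  | head w => exact SEq.refl _
  | @cons p w r hadj h2 ih =>
    refine (ih.cons p).trans (SwapS.single ?_)
    exact ⟨[], r, p.1, v, p.2, c, hadj.symm, by simp, by simp⟩

theorem FD.decomp {v : V} {c : Γ v} {w r : List (Σ v : V, Γ v)} (h : FD G Γ v c w r) :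
    ∃ w₁ w₂, w = w₁ ++ ⟨v, c⟩ :: w₂ ∧ r = w₁ ++ w₂ ∧ ∀ q ∈ w₁, G.Adj v q.1 := by
  induction h with
  | head w => exact ⟨[], w, rfl, rfl, by simp⟩
  | cons p hadj h2 ih =>
    obtain ⟨w₁, w₂, rfl, rfl, hall⟩ := ih
    refine ⟨p :: w₁, w₂, rfl, rfl, ?_⟩
    intro q hq
    rcases List.mem_cons.1 hq with rfl | hq
    · exact hadj
    · exact hall q hq

theorem FD.ofDecomp {v : V} {c : Γ v} {w₁ w₂ : List (Σ v : V, Γ v)}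
    (hall : ∀ q ∈ w₁, G.Adj v q.1) : FD G Γ v c (w₁ ++ ⟨v, c⟩ :: w₂) (w₁ ++ w₂) := by
  induction w₁ with
  | nil => exact FD.head _
  | cons p w₁ ih =>
    exact FD.cons p (hall p (List.mem_cons_self))
      (ih fun q hq => hall q (List.mem_cons_of_mem _ hq))

/-- Front decompositions are stable under a single swap. -/
theorem FD.swapS {v : V} {c : Γ v} {w w' r : List (Σ v : V, Γ v)}
    (hs : SwapS G Γ w w') (h : FD G Γ v c w r) :
    ∃ r', FD G Γ v c w' r' ∧ SEq G Γ r r' := by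
  obtain ⟨x₁, x₂, u₁, u₂, a, b, hadj, rfl, rfl⟩ := hs
  induction x₁ generalizing r with
  | nil =>
    simp only [List.nil_append] at h ⊢
    cases h with
    | head =>
      exact ⟨⟨u₂, b⟩ :: x₂, FD.cons _ hadj (FD.head _), SEq.refl _⟩
    | cons p hadj1 h2 =>
      cases h2 with
      | head => exact ⟨⟨u₁, a⟩ :: x₂, FD.head _, SEq.refl _⟩
      | cons q hadj2 h3 =>
        refine ⟨⟨u₂, b⟩ :: ⟨u₁, a⟩ :: _, FD.cons _ hadj2 (FD.cons _ hadj1 h3),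
          SwapS.single ⟨[], _, u₁, u₂, a, b, hadj, rfl, rfl⟩⟩
  | cons s x₁ ih =>
    simp only [List.cons_append] at h ⊢
    cases h with
    | head =>
      exact ⟨x₁ ++ ⟨u₂, b⟩ :: ⟨u₁, a⟩ :: x₂, FD.head _,
        SwapS.single ⟨x₁, x₂, u₁, u₂, a, b, hadj, rfl, rfl⟩⟩
    | cons p hadj1 h2 =>
      obtain ⟨r', hr', hse⟩ := ih h2
      exact ⟨s :: r', FD.cons _ hadj1 hr', hse.cons s⟩

theorem FD.seq {v : V} {c : Γ v} {w w' r : List (Σ v : V, Γ v)}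
    (hs : SEq G Γ w w') (h : FD G Γ v c w r) :
    ∃ r', FD G Γ v c w' r' ∧ SEq G Γ r r' := by
  induction hs with
  | refl => exact ⟨r, h, SEq.refl _⟩
  | tail _ hstep ih =>
    obtain ⟨r', hr', hse⟩ := ih
    obtain ⟨r'', hr'', hse'⟩ := hr'.swapS hstep
    exact ⟨r'', hr'', hse.trans hse'⟩

variable (G Γ) in
/-- `BadP v w` : the word `w` contains a syllable at `v` followed, after only
syllables at vertices adjacent to `v`, by another syllable at `v`. -/
inductive BadP (v : V) : List (Σ v : V, Γ v) → Prop
  | found (a : Γ v) {w r : List (Σ v : V, Γ v)} (b : Γ v) (h : FD G Γ v b w r) :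
      BadP v (⟨v, a⟩ :: w)
  | cons (p : Σ v : V, Γ v) {w : List (Σ v : V, Γ v)} (h : BadP v w) : BadP v (p :: w)

variable (G Γ) in
/-- A word is locally reduced: no trivial syllables and no mergeable pair. -/
def LocRed (w : List (Σ v : V, Γ v)) : Prop :=
  (∀ p ∈ w, p.2 ≠ (1 : Γ p.1)) ∧ ∀ v : V, ¬ BadP G Γ v w

theorem BadP.swapS {v : V} {w w' : List (Σ v : V, Γ v)}
    (hs : SwapS G Γ w w') (h : BadP G Γ v w) : BadP G Γ v w' := by
  obtain ⟨x₁, x₂, u₁, u₂, a, b, hadj, rfl, rfl⟩ := hs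
  induction x₁ with
  | nil =>
    simp only [List.nil_append] at h ⊢
    cases h with
    | found a' b' hfd =>
      cases hfd with
      | head => exact absurd hadj (by simp [G.irrefl])
      | @cons q w r hadj2 h3 =>
        exact BadP.cons _ (BadP.found a' b' h3)
    | cons p h2 =>
      cases h2 with
      | @found a' w r b' hfd =>
        exact BadP.found a' b' (FD.cons _ (by exact hadj.symm) hfd)
      | cons q h3 => exact BadP.cons _ (BadP.cons _ h3)
  | cons s x₁ ih =>
    simp only [List.cons_append] at h ⊢
    cases h with
    | found a' b' hfd =>
      obtain ⟨r', hr', _⟩ := hfd.swapS ⟨x₁, x₂, u₁, u₂, a, b, hadj, rfl, rfl⟩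
      exact BadP.found a' b' hr'
    | cons p h2 => exact BadP.cons _ (ih h2)

theorem LocRed.swapS {w w' : List (Σ v : V, Γ v)} (hs : SwapS G Γ w w')
    (h : LocRed G Γ w) : LocRed G Γ w' := by
  obtain ⟨h1, h2⟩ := h
  constructor
  · obtain ⟨x₁, x₂, u₁, u₂, a, b, hadj, rfl, rfl⟩ := hs
    intro p hp
    apply h1
    simp only [List.mem_append, List.mem_cons] at hp ⊢
    tauto
  · intro v hb
    exact h2 v (hb.swapS hs.symm)

theorem LocRed.seq {w w' : List (Σ v : V, Γ v)} (hs : SEq G Γ w w')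
    (h : LocRed G Γ w) : LocRed G Γ w' := by
  induction hs with
  | refl => exact h
  | tail _ hstep ih => exact ih.swapS hstep

theorem LocRed.tail {p : Σ v : V, Γ v} {w : List (Σ v : V, Γ v)}
    (h : LocRed G Γ (p :: w)) : LocRed G Γ w :=
  ⟨fun q hq => h.1 q (List.mem_cons_of_mem _ hq), fun v hb => h.2 v (BadP.cons p hb)⟩

theorem BadP.exists_decomp {v : V} {w : List (Σ v : V, Γ v)} (h : BadP G Γ v w) :
    ∃ (w₁ : List (Σ v : V, Γ v)) (a : Γ v) (t : List (Σ v : V, Γ v)) (b : Γ v)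
      (r : List (Σ v : V, Γ v)), w = w₁ ++ ⟨v, a⟩ :: t ∧ FD G Γ v b t r := by
  induction h with
  | @found a w r b hfd => exact ⟨[], a, w, b, r, rfl, hfd⟩
  | cons p h ih =>
    obtain ⟨w₁, a, t, b, r, rfl, hfd⟩ := ih
    exact ⟨p :: w₁, a, t, b, r, rfl, hfd⟩

/-- Swap steps are elementary steps. -/
theorem SwapS.wstep {w w' : List (Σ v : V, Γ v)} (h : SwapS G Γ w w') : WStep G Γ w w' := by
  obtain ⟨w₁, w₂, u, v, a, b, hadj, rfl, rfl⟩ := h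
  exact WStep.swap w₁ w₂ u v a b hadj

theorem SEq.wsteps {w w' : List (Σ v : V, Γ v)} (h : SEq G Γ w w') :
    Relation.ReflTransGen (WStep G Γ) w w' :=
  Relation.ReflTransGen.mono (fun _ _ => SwapS.wstep) _ _ h

/-- A graphically reduced word is locally reduced. -/
theorem ReducedWord.locRed {w : List (Σ v : V, Γ v)} (h : ReducedWord G Γ w) :
    LocRed G Γ w := by
  constructor
  · rintro ⟨v, a⟩ hp ha
    dsimp at ha
    rw [ha] at hp
    obtain ⟨s, t, rfl⟩ := List.append_of_mem hp
    have := h (s ++ t) (Relation.ReflTransGen.single (WStep.delete s t v))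
    simp at this
  · intro v hb
    obtain ⟨w₁, a, t, b, r, rfl, hfd⟩ := hb.exists_decomp
    have h1 : SEq G Γ (w₁ ++ ⟨v, a⟩ :: t) (w₁ ++ ⟨v, a⟩ :: ⟨v, b⟩ :: r) :=
      SEq.append_left w₁ ((hfd.toFront).cons ⟨v, a⟩)
    have h2 : Relation.ReflTransGen (WStep G Γ) (w₁ ++ ⟨v, a⟩ :: t) (w₁ ++ ⟨v, a * b⟩ :: r) :=
      h1.wsteps.tail (WStep.merge w₁ r v a b)
    have := h _ h2
    simp [hfd.length] at this

theorem FD.inv_cons {v : V} {c : Γ v} {p : Σ v : V, Γ v} {w r : List (Σ v : V, Γ v)}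
    (h : FD G Γ v c (p :: w) r) (hne : p.1 ≠ v) :
    ∃ r₀, FD G Γ v c w r₀ ∧ r = p :: r₀ ∧ G.Adj v p.1 := by
  cases h with
  | head => exact absurd rfl hne
  | cons p hadj h2 => exact ⟨_, h2, rfl, hadj⟩

/-- Two front decompositions at distinct vertices commute. -/
theorem FD.comm {u v : V} {d : Γ u} {c : Γ v} {w s r : List (Σ v : V, Γ v)}
    (hu : FD G Γ u d w s) (hv : FD G Γ v c w r) (hne : u ≠ v) :
    ∃ t, FD G Γ v c s t ∧ FD G Γ u d r t := by
  induction hu generalizing r with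
  | head w =>
    obtain ⟨r₀, h2, rfl, hadj⟩ := hv.inv_cons (fun h => hne h)
    exact ⟨r₀, h2, FD.head _⟩
  | @cons p w' s₀ hadj h2 ih =>
    cases hv with
    | head => exact ⟨s₀, FD.head _, h2⟩
    | @cons q w'' r₀ hadj' h3 =>
      obtain ⟨t₀, ht1, ht2⟩ := ih h3
      exact ⟨p :: t₀, FD.cons p hadj' ht1, FD.cons p hadj ht2⟩

/-- A front decomposition of the remainder extends to the original word. -/
theorem FD.extend {u v : V} {d : Γ u} {c : Γ v} {w s t : List (Σ v : V, Γ v)}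
    (hu : FD G Γ u d w s) (hv : FD G Γ v c s t) (hadj : G.Adj u v) :
    ∃ r, FD G Γ v c w r := by
  induction hu generalizing t with
  | head w => exact ⟨_, FD.cons ⟨u, d⟩ hadj.symm hv⟩
  | @cons p w' s₀ hadj h2 ih =>
    cases hv with
    | head => exact ⟨_, FD.head _⟩
    | @cons q w'' t₀ hadj' h3 =>
      obtain ⟨r₀, hr₀⟩ := ih h3
      exact ⟨p :: r₀, FD.cons p hadj' hr₀⟩

theorem LocRed.fd_ne_one {v : V} {c : Γ v} {w r : List (Σ v : V, Γ v)}
    (h : LocRed G Γ w) (hfd : FD G Γ v c w r) : c ≠ 1 :=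
  h.1 ⟨v, c⟩ hfd.mem

theorem LocRed.fd_rem {v : V} {c : Γ v} {w r : List (Σ v : V, Γ v)}
    (h : LocRed G Γ w) (hfd : FD G Γ v c w r) : LocRed G Γ r :=
  (h.seq hfd.toFront).tail

theorem LocRed.fd_no_second {v : V} {c : Γ v} {w r : List (Σ v : V, Γ v)}
    (h : LocRed G Γ w) (hfd : FD G Γ v c w r) : ¬ ∃ (d : Γ v) (r₂ : _), FD G Γ v d r r₂ := by
  rintro ⟨d, r₂, hd⟩
  exact (h.seq hfd.toFront).2 v (BadP.found c d hd)

theorem LocRed.cons_head {v : V} {c : Γ v} {r : List (Σ v : V, Γ v)}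
    (h : LocRed G Γ (⟨v, c⟩ :: r)) {b : Γ v} (hb : b ≠ 1) : LocRed G Γ (⟨v, b⟩ :: r) := by
  constructor
  · rintro p hp
    rcases List.mem_cons.1 hp with rfl | hp
    · exact hb
    · exact h.1 p (List.mem_cons_of_mem _ hp)
  · intro v' hbad
    cases hbad with
    | found a' b' hfd => exact h.2 v (BadP.found c b' hfd)
    | cons p h3 => exact h.2 v' (BadP.cons _ h3)

theorem LocRed.cons_noFD {v : V} {w : List (Σ v : V, Γ v)} (h : LocRed G Γ w)
    (hno : ¬ ∃ (c : Γ v) (r : _), FD G Γ v c w r) {a : Γ v} (ha : a ≠ 1) :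
    LocRed G Γ (⟨v, a⟩ :: w) := by
  constructor
  · rintro p hp
    rcases List.mem_cons.1 hp with rfl | hp
    · exact ha
    · exact h.1 p hp
  · intro v' hbad
    cases hbad with
    | found a' b' hfd => exact hno ⟨b', _, hfd⟩
    | cons p h3 => exact h.2 v' h3

theorem noFD_cons {u v : V} {a : Γ u} {w : List (Σ v : V, Γ v)} (hne : u ≠ v)
    (hno : ¬ ∃ (c : Γ v) (r : _), FD G Γ v c w r) :
    ¬ ∃ (c : Γ v) (r : _), FD G Γ v c (⟨u, a⟩ :: w) r := by
  rintro ⟨c, r, hfd⟩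
  obtain ⟨r₀, h2, -, -⟩ := hfd.inv_cons (fun h => hne h)
  exact hno ⟨c, r₀, h2⟩

theorem noFD_seq {v : V} {w w' : List (Σ v : V, Γ v)} (hs : SEq G Γ w w')
    (hno : ¬ ∃ (c : Γ v) (r : _), FD G Γ v c w r) :
    ¬ ∃ (c : Γ v) (r : _), FD G Γ v c w' r := by
  rintro ⟨c, r, hfd⟩
  obtain ⟨r₀, h2, -⟩ := hfd.seq hs.symm
  exact hno ⟨c, r₀, h2⟩

theorem noFD_of_fd {u v : V} {d : Γ u} {w s : List (Σ v : V, Γ v)}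
    (hu : FD G Γ u d w s) (hadj : G.Adj u v)
    (hno : ¬ ∃ (c : Γ v) (r : _), FD G Γ v c w r) :
    ¬ ∃ (c : Γ v) (r : _), FD G Γ v c s r := by
  rintro ⟨c, t, hfd⟩
  obtain ⟨r, hr⟩ := hu.extend hfd hadj
  exact hno ⟨c, r, hr⟩

-- The action of `a : Γ v` on a (locally reduced) word.
open Classical in
noncomputable def actList (G : SimpleGraph V) (Γ : V → Type) [∀ v, Group (Γ v)]
    (v : V) (a : Γ v) (w : List (Σ v : V, Γ v)) :
    List (Σ v : V, Γ v) :=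
  if h : ∃ (c : Γ v) (r : _), FD G Γ v c w r then
    if a * h.choose = 1 then h.choose_spec.choose
    else ⟨v, a * h.choose⟩ :: h.choose_spec.choose
  else if a = 1 then w else ⟨v, a⟩ :: w

open Classical in
theorem actList_fd {v : V} {c : Γ v} {w r : List (Σ v : V, Γ v)} (a : Γ v)
    (hfd : FD G Γ v c w r) :
    actList G Γ v a w = if a * c = 1 then r else ⟨v, a * c⟩ :: r := by
  have hex : ∃ (c : Γ v) (r : _), FD G Γ v c w r := ⟨c, r, hfd⟩
  rw [actList, dif_pos hex]
  obtain ⟨hc, hr⟩ := FD.unique hex.choose_spec.choose_spec hfd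
  subst hc; subst hr; rfl

open Classical in
theorem actList_nofd {v : V} {w : List (Σ v : V, Γ v)} (a : Γ v)
    (hno : ¬ ∃ (c : Γ v) (r : _), FD G Γ v c w r) :
    actList G Γ v a w = if a = 1 then w else ⟨v, a⟩ :: w := by
  rw [actList, dif_neg hno]

theorem actList_locRed {v : V} (a : Γ v) {w : List (Σ v : V, Γ v)} (h : LocRed G Γ w) :
    LocRed G Γ (actList G Γ v a w) := by
  by_cases hex : ∃ (c : Γ v) (r : _), FD G Γ v c w r
  · obtain ⟨c, r, hfd⟩ := hex
    rw [actList_fd a hfd]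
    split_ifs with h1
    · exact h.fd_rem hfd
    · exact (h.seq hfd.toFront).cons_head h1
  · rw [actList_nofd a hex]
    split_ifs with h1
    · exact h
    · exact h.cons_noFD hex h1

theorem actList_seq {v : V} (a : Γ v) {w w' : List (Σ v : V, Γ v)} (hs : SEq G Γ w w') :
    SEq G Γ (actList G Γ v a w) (actList G Γ v a w') := by
  by_cases hex : ∃ (c : Γ v) (r : _), FD G Γ v c w r
  · obtain ⟨c, r, hfd⟩ := hex
    obtain ⟨r', hfd', hse⟩ := hfd.seq hs
    rw [actList_fd a hfd, actList_fd a hfd']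
    split_ifs with h1
    · exact hse
    · exact hse.cons _
  · rw [actList_nofd a hex, actList_nofd a (noFD_seq hs hex)]
    split_ifs with h1
    · exact hs
    · exact hs.cons _

theorem actList_one {v : V} {w : List (Σ v : V, Γ v)} (h : LocRed G Γ w) :
    SEq G Γ (actList G Γ v 1 w) w := by
  by_cases hex : ∃ (c : Γ v) (r : _), FD G Γ v c w r
  · obtain ⟨c, r, hfd⟩ := hex
    rw [actList_fd 1 hfd, one_mul, if_neg (h.fd_ne_one hfd)]
    exact hfd.toFront.symm
  · rw [actList_nofd 1 hex, if_pos rfl]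
    exact SEq.refl _

theorem actList_mul {v : V} (a b : Γ v) {w : List (Σ v : V, Γ v)} (h : LocRed G Γ w) :
    actList G Γ v a (actList G Γ v b w) = actList G Γ v (a * b) w := by
  by_cases hex : ∃ (c : Γ v) (r : _), FD G Γ v c w r
  · obtain ⟨c, r, hfd⟩ := hex
    have habc : a * b * c = a * (b * c) := mul_assoc a b c
    by_cases hbc : b * c = 1
    · rw [actList_fd b hfd, if_pos hbc, actList_fd (a * b) hfd, habc, hbc, mul_one,
        actList_nofd a (h.fd_no_second hfd)]
    · rw [actList_fd b hfd, if_neg hbc,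
        actList_fd a (FD.head (c := b * c) r), actList_fd (a * b) hfd, habc]
  · by_cases hb : b = 1
    · rw [actList_nofd b hex, if_pos hb, hb, mul_one]
    · rw [actList_nofd b hex, if_neg hb, actList_fd a (FD.head (c := b) w),
        actList_nofd (a * b) hex]

/-- The actions at adjacent vertices commute. -/
theorem actList_comm {u v : V} (a : Γ u) (b : Γ v) {w : List (Σ v : V, Γ v)}
    (h : LocRed G Γ w) (hadj : G.Adj u v) :
    SEq G Γ (actList G Γ u a (actList G Γ v b w)) (actList G Γ v b (actList G Γ u a w)) := by
  have hne : u ≠ v := hadj.ne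
  have swap1 : ∀ (x : Γ u) (y : Γ v) (t : List (Σ v : V, Γ v)),
      SEq G Γ (⟨u, x⟩ :: ⟨v, y⟩ :: t) (⟨v, y⟩ :: ⟨u, x⟩ :: t) := fun x y t =>
    SwapS.single ⟨[], t, u, v, x, y, hadj, rfl, rfl⟩
  by_cases hexu : ∃ (d : Γ u) (s : _), FD G Γ u d w s
  · obtain ⟨d, s, hfdu⟩ := hexu
    by_cases hexv : ∃ (c : Γ v) (r : _), FD G Γ v c w r
    · -- both fronts exist
      obtain ⟨c, r, hfdv⟩ := hexv
      obtain ⟨t, hvs, hur⟩ := hfdu.comm hfdv hne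
      by_cases hbc : b * c = 1 <;> by_cases had : a * d = 1
      · simp only [actList_fd b hfdv, actList_fd a hfdu, if_pos hbc, if_pos had,
          actList_fd a hur, actList_fd b hvs]
        exact SEq.refl _
      · simp only [actList_fd b hfdv, actList_fd a hfdu, if_pos hbc, if_neg had,
          actList_fd a hur, actList_fd b (FD.cons ⟨u, a * d⟩ hadj.symm hvs)]
        exact SEq.refl _
      · simp only [actList_fd b hfdv, actList_fd a hfdu, if_neg hbc, if_pos had,
          actList_fd a (FD.cons ⟨v, b * c⟩ hadj hur), actList_fd b hvs]
        exact SEq.refl _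
      · simp only [actList_fd b hfdv, actList_fd a hfdu, if_neg hbc, if_neg had,
          actList_fd a (FD.cons ⟨v, b * c⟩ hadj hur),
          actList_fd b (FD.cons ⟨u, a * d⟩ hadj.symm hvs)]
        exact swap1 (a * d) (b * c) t
    · -- front at u only
      have hnos : ¬ ∃ (c : Γ v) (r : _), FD G Γ v c s r := noFD_of_fd hfdu hadj hexv
      by_cases hb : b = 1 <;> by_cases had : a * d = 1
      · simp only [actList_nofd b hexv, actList_fd a hfdu, if_pos hb, if_pos had,
          actList_nofd b hnos]
        exact SEq.refl _
      · simp only [actList_nofd b hexv, actList_fd a hfdu, if_pos hb, if_neg had,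
          actList_nofd b (noFD_cons hne hnos)]
        exact SEq.refl _
      · simp only [actList_nofd b hexv, actList_fd a hfdu, if_neg hb, if_pos had,
          actList_fd a (FD.cons ⟨v, b⟩ hadj hfdu), actList_nofd b hnos]
        exact SEq.refl _
      · simp only [actList_nofd b hexv, actList_fd a hfdu, if_neg hb, if_neg had,
          actList_fd a (FD.cons ⟨v, b⟩ hadj hfdu), actList_nofd b (noFD_cons hne hnos)]
        exact swap1 (a * d) b s
  · by_cases hexv : ∃ (c : Γ v) (r : _), FD G Γ v c w r
    · -- front at v only
      obtain ⟨c, r, hfdv⟩ := hexv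
      have hnor : ¬ ∃ (d : Γ u) (s : _), FD G Γ u d r s := noFD_of_fd hfdv hadj.symm hexu
      by_cases hbc : b * c = 1 <;> by_cases ha : a = 1
      · simp only [actList_fd b hfdv, actList_nofd a hexu, if_pos hbc, if_pos ha,
          actList_nofd a hnor]
        exact SEq.refl _
      · simp only [actList_fd b hfdv, actList_nofd a hexu, if_pos hbc, if_neg ha,
          actList_nofd a hnor, actList_fd b (FD.cons ⟨u, a⟩ hadj.symm hfdv)]
        exact SEq.refl _
      · simp only [actList_fd b hfdv, actList_nofd a hexu, if_neg hbc, if_pos ha,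
          actList_nofd a (noFD_cons hne.symm hnor)]
        exact SEq.refl _
      · simp only [actList_fd b hfdv, actList_nofd a hexu, if_neg hbc, if_neg ha,
          actList_nofd a (noFD_cons hne.symm hnor), actList_fd b (FD.cons ⟨u, a⟩ hadj.symm hfdv)]
        exact swap1 a (b * c) r
    · -- no fronts
      by_cases hb : b = 1 <;> by_cases ha : a = 1
      · simp only [actList_nofd b hexv, actList_nofd a hexu, if_pos hb, if_pos ha]
        exact SEq.refl _
      · simp only [actList_nofd b hexv, actList_nofd a hexu, if_pos hb, if_neg ha,
          actList_nofd b (noFD_cons hne hexv)]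
        exact SEq.refl _
      · simp only [actList_nofd b hexv, actList_nofd a hexu, if_neg hb, if_pos ha,
          actList_nofd a (noFD_cons hne.symm hexu)]
        exact SEq.refl _
      · simp only [actList_nofd b hexv, actList_nofd a hexu, if_neg hb, if_neg ha,
          actList_nofd a (noFD_cons hne.symm hexu), actList_nofd b (noFD_cons hne hexv)]
        exact swap1 a b w

variable (G Γ) in
/-- Setoid of locally reduced words up to swap equivalence. -/
def RedSetoid : Setoid {w : List (Σ v : V, Γ v) // LocRed G Γ w} :=
  ⟨fun x y => SEq G Γ x.1 y.1, ⟨fun _ => SEq.refl _, SEq.symm, SEq.trans⟩⟩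

variable (G Γ) in
/-- Normal forms: swap classes of locally reduced words. -/
def NF : Type := Quotient (RedSetoid G Γ)

variable (G Γ) in
theorem locRed_nil : LocRed G Γ [] :=
  ⟨by simp, fun v hb => by cases hb⟩

variable (G Γ) in
/-- The action of `a : Γ v` on normal forms. -/
noncomputable def actNF (v : V) (a : Γ v) : NF G Γ → NF G Γ :=
  Quotient.map' (fun w => ⟨actList G Γ v a w.1, actList_locRed a w.2⟩)
    (fun _ _ h => actList_seq a h)

theorem actNF_mk {v : V} (a : Γ v) (w : {w : List (Σ v : V, Γ v) // LocRed G Γ w}) :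
    actNF G Γ v a (Quotient.mk'' w) =
      (Quotient.mk'' ⟨actList G Γ v a w.1, actList_locRed a w.2⟩ : NF G Γ) := rfl

theorem actNF_one {v : V} (x : NF G Γ) : actNF G Γ v 1 x = x := by
  induction x using Quotient.inductionOn' with
  | h w => exact Quotient.sound' (actList_one w.2)

theorem actNF_mul {v : V} (a b : Γ v) (x : NF G Γ) :
    actNF G Γ v a (actNF G Γ v b x) = actNF G Γ v (a * b) x := by
  induction x using Quotient.inductionOn' with
  | h w =>
    refine Quotient.sound' (show SEq G Γ (actList G Γ v a (actList G Γ v b w.1))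
      (actList G Γ v (a * b) w.1) from ?_)
    rw [actList_mul a b w.2]
    exact SEq.refl _

theorem actNF_comm {u v : V} (a : Γ u) (b : Γ v) (hadj : G.Adj u v) (x : NF G Γ) :
    actNF G Γ u a (actNF G Γ v b x) = actNF G Γ v b (actNF G Γ u a x) := by
  induction x using Quotient.inductionOn' with
  | h w => exact Quotient.sound' (actList_comm a b w.2 hadj)

variable (G Γ) in
/-- The action of the vertex group `Γ v` on normal forms, as permutations. -/
noncomputable def ePerm (v : V) : Γ v →* Equiv.Perm (NF G Γ) where
  toFun a :=
    { toFun := actNF G Γ v a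
      invFun := actNF G Γ v a⁻¹
      left_inv := fun x => by rw [actNF_mul, inv_mul_cancel, actNF_one]
      right_inv := fun x => by rw [actNF_mul, mul_inv_cancel, actNF_one] }
  map_one' := Equiv.ext fun x => actNF_one x
  map_mul' a b := Equiv.ext fun x => (actNF_mul a b x).symm

variable (G Γ) in
/-- The lifted action of the free product. -/
noncomputable def phiNF : CoprodI Γ →* Equiv.Perm (NF G Γ) :=
  Monoid.CoprodI.lift (fun v => ePerm G Γ v)

open commutatorElement in
theorem normalClosure_le_ker_phiNF :
    Subgroup.normalClosure (gpRels G Γ) ≤ (phiNF G Γ).ker := by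
  apply Subgroup.normalClosure_le_normal
  rintro x ⟨u, v, a, b, hadj, rfl⟩
  have : phiNF G Γ (CoprodI.of a * CoprodI.of b * (CoprodI.of a)⁻¹ * (CoprodI.of b)⁻¹) =
      ⁅ePerm G Γ u a, ePerm G Γ v b⁆ := by
    simp [commutatorElement_def, map_mul, map_inv, phiNF, Monoid.CoprodI.lift_of]
  rw [SetLike.mem_coe, MonoidHom.mem_ker, this, commutatorElement_eq_one_iff_commute]
  apply Equiv.ext
  intro x
  simp only [Equiv.Perm.mul_apply, ePerm, MonoidHom.coe_mk, OneHom.coe_mk, Equiv.coe_fn_mk]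
  exact actNF_comm a b hadj x

variable (G Γ) in
/-- The action of the graph product on normal forms. -/
noncomputable def psiNF : GraphProduct G Γ →* Equiv.Perm (NF G Γ) :=
  QuotientGroup.lift _ (phiNF G Γ) normalClosure_le_ker_phiNF

theorem psiNF_eval (w : List (Σ v : V, Γ v)) (hw : LocRed G Γ w) :
    psiNF G Γ (evalWord G Γ w) (Quotient.mk'' ⟨[], locRed_nil G Γ⟩) =
      Quotient.mk'' ⟨w, hw⟩ := by
  induction w with
  | nil =>
    have : evalWord G Γ ([] : List (Σ v : V, Γ v)) = 1 := by simp [evalWord]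
    rw [this, map_one]
    rfl
  | cons p w ih =>
    have hev : evalWord G Γ (p :: w) = gpMk G Γ (CoprodI.of p.2) * evalWord G Γ w := by
      simp [evalWord]
    have hno : ¬ ∃ (c : Γ p.1) (r : _), FD G Γ p.1 c w r := by
      rintro ⟨c, r, hfd⟩
      exact hw.2 p.1 (BadP.found p.2 c hfd)
    have hne1 : p.2 ≠ 1 := hw.1 p (List.mem_cons_self)
    have hact : actList G Γ p.1 p.2 w = p :: w := by
      rw [actList_nofd p.2 hno, if_neg hne1]
    rw [hev, map_mul]
    have hmk : psiNF G Γ (gpMk G Γ (CoprodI.of p.2)) = ePerm G Γ p.1 p.2 :=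
      Monoid.CoprodI.lift_of _ _
    erw [Equiv.Perm.mul_apply]; rw [ih hw.tail, hmk]
    show actNF G Γ p.1 p.2 (Quotient.mk'' ⟨w, hw.tail⟩) = _
    rw [actNF_mk]
    refine Quotient.sound' (show SEq G Γ (actList G Γ p.1 p.2 w) (p :: w) from ?_)
    rw [hact]
    exact SEq.refl _

/-- The normal form theorem: locally reduced words with the same evaluation are
swap equivalent. -/
theorem eval_eq_seq {w₁ w₂ : List (Σ v : V, Γ v)} (h₁ : LocRed G Γ w₁)
    (h₂ : LocRed G Γ w₂) (he : evalWord G Γ w₁ = evalWord G Γ w₂) : SEq G Γ w₁ w₂ := by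
  have := psiNF_eval w₁ h₁
  rw [he, psiNF_eval w₂ h₂] at this
  exact SEq.symm (Quotient.exact' this)

theorem SwapS.reverse {w w' : List (Σ v : V, Γ v)} (h : SwapS G Γ w w') :
    SwapS G Γ w.reverse w'.reverse := by
  obtain ⟨w₁, w₂, u, v, a, b, hadj, rfl, rfl⟩ := h
  exact ⟨w₂.reverse, w₁.reverse, v, u, b, a, hadj.symm, by simp, by simp⟩

theorem SEq.reverse {w w' : List (Σ v : V, Γ v)} (h : SEq G Γ w w') :
    SEq G Γ w.reverse w'.reverse := by
  induction h with
  | refl => exact SEq.refl _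
  | tail _ hs ih => exact ih.trans (SwapS.single hs.reverse)

end GPAux

/-- For any element `g` of a graph product, `tail g` is a clique of the defining
graph. -/
theorem stmt12 {V : Type} (G : SimpleGraph V) (Γ : V → Type) [∀ v, Group (Γ v)]
    (g : GraphProduct G Γ) : G.IsClique (tail G Γ g) := by
  rintro v ⟨w₁, p₁, hred₁, heval₁, hlast₁, hp₁⟩ u ⟨w₂, p₂, hred₂, heval₂, hlast₂, hp₂⟩ hne
  subst hp₁; subst hp₂
  have h₁ : GPAux.LocRed G Γ w₁ := GPAux.ReducedWord.locRed hred₁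
  have h₂ : GPAux.LocRed G Γ w₂ := GPAux.ReducedWord.locRed hred₂
  have hseq : GPAux.SEq G Γ w₁ w₂ := GPAux.eval_eq_seq h₁ h₂ (heval₁.trans heval₂.symm)
  have hr1 : w₁.reverse.head? = some p₁ := by rw [List.head?_reverse]; exact hlast₁
  have hr2 : w₂.reverse.head? = some p₂ := by rw [List.head?_reverse]; exact hlast₂
  obtain ⟨t₁, hW1⟩ : ∃ t₁, w₁.reverse = p₁ :: t₁ := by
    cases hW : w₁.reverse with
    | nil => rw [hW] at hr1; simp at hr1
    | cons q t => rw [hW] at hr1; simp at hr1; exact ⟨t, by rw [hr1]⟩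
  obtain ⟨t₂, hW2⟩ : ∃ t₂, w₂.reverse = p₂ :: t₂ := by
    cases hW : w₂.reverse with
    | nil => rw [hW] at hr2; simp at hr2
    | cons q t => rw [hW] at hr2; simp at hr2; exact ⟨t, by rw [hr2]⟩
  have hfd1 : GPAux.FD G Γ p₁.1 p₁.2 w₁.reverse t₁ := by
    rw [hW1]; exact GPAux.FD.head _
  obtain ⟨r', hfd2, -⟩ := hfd1.seq hseq.reverse
  obtain ⟨z₁, z₂, hzdec, -, hall⟩ := hfd2.decomp
  rw [hW2] at hzdec
  cases z₁ with
  | nil =>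
    simp only [List.nil_append, List.cons.injEq] at hzdec
    exact absurd (congrArg Sigma.fst hzdec.1).symm hne
  | cons q z₁' =>
    simp only [List.cons_append, List.cons.injEq] at hzdec
    have hadj : G.Adj p₁.1 q.1 := hall q (List.mem_cons_self)
    rw [hzdec.1]
    exact hadj
end
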